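/- arXiv:1207.5114 — 2 statements merged into one kernel-verified Lean document; each statement's English description precedes it below -/
import Mathlib

section
/- (Ptolemaean inequality in ∂𝐇²_ℂ, first inequality) Let p₁, p₂, p₃, p₄ ∈ ℂ³ be nonzero null vectors (⟨pᵢ,pᵢ⟩ = 0) whose pairwise Hermitian pairings are nonzero (⟨pᵢ,pⱼ⟩ ≠ 0 for i ≠ j). Setting 𝕏₁ = 𝕏(p₁,p₂,p₃,p₄) and 𝕏₂ = 𝕏(p₁,p₃,p₂,p₄), one has |𝕏₁|^{1/2} + |𝕏₂|^{1/2} ≥ 1. -/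
/-- The Hermitian form of signature (2,1) on ℂ³:
`⟨z,w⟩ = z₁·conj(w₃) + z₂·conj(w₂) + z₃·conj(w₁)`. -/
noncomputable def herm (z w : Fin 3 → ℂ) : ℂ :=
  z 0 * starRingEnd ℂ (w 2) + z 1 * starRingEnd ℂ (w 1) + z 2 * starRingEnd ℂ (w 0)

/-- The Korányi–Reimann complex cross-ratio. -/
noncomputable def crossRatio (p₁ p₂ p₃ p₄ : Fin 3 → ℂ) : ℂ :=
  (herm p₃ p₁ * herm p₄ p₂) / (herm p₄ p₁ * herm p₃ p₂)

lemma herm_conj (z w : Fin 3 → ℂ) : herm w z = starRingEnd ℂ (herm z w) := by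
  simp [herm]; ring

lemma herm_sum (g : Fin 4 → ℂ) (q : Fin 4 → Fin 3 → ℂ) (w : Fin 3 → ℂ) :
    herm (∑ i, g i • q i) w = ∑ i, g i * herm (q i) w := by
  simp only [herm, Finset.sum_apply, Pi.smul_apply, smul_eq_mul, Finset.sum_mul,
    ← Finset.sum_add_distrib]
  exact Finset.sum_congr rfl fun i _ => by ring

lemma my_det_fin_four (M : Matrix (Fin 4) (Fin 4) ℂ) :
    M.det =
      M 0 0 * (M 1 1 * (M 2 2 * M 3 3 - M 2 3 * M 3 2) - M 1 2 * (M 2 1 * M 3 3 - M 2 3 * M 3 1)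
        + M 1 3 * (M 2 1 * M 3 2 - M 2 2 * M 3 1))
      - M 0 1 * (M 1 0 * (M 2 2 * M 3 3 - M 2 3 * M 3 2) - M 1 2 * (M 2 0 * M 3 3 - M 2 3 * M 3 0)
        + M 1 3 * (M 2 0 * M 3 2 - M 2 2 * M 3 0))
      + M 0 2 * (M 1 0 * (M 2 1 * M 3 3 - M 2 3 * M 3 1) - M 1 1 * (M 2 0 * M 3 3 - M 2 3 * M 3 0)
        + M 1 3 * (M 2 0 * M 3 1 - M 2 1 * M 3 0))
      - M 0 3 * (M 1 0 * (M 2 1 * M 3 2 - M 2 2 * M 3 1) - M 1 1 * (M 2 0 * M 3 2 - M 2 2 * M 3 0)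
        + M 1 2 * (M 2 0 * M 3 1 - M 2 1 * M 3 0)) := by
  rw [Matrix.det_succ_row_zero, Fin.sum_univ_four]
  norm_num [Matrix.det_fin_three, Fin.succAbove, Fin.lt_def,
    show ((3:Fin 4):ℕ)=3 from rfl, show (Fin.succ 2 : Fin 4) = 3 from rfl,
    show (Fin.castSucc 2 : Fin 4) = 2 from rfl]
  ring

set_option maxHeartbeats 1000000 in
theorem ptolemaean_inequality_boundary_first
    (p : Fin 4 → Fin 3 → ℂ)
    (hne : ∀ i, p i ≠ 0)
    (hnull : ∀ i, herm (p i) (p i) = 0)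
    (hpair : ∀ i j, i ≠ j → herm (p i) (p j) ≠ 0) :
    1 ≤ Real.sqrt ‖crossRatio (p 0) (p 1) (p 2) (p 3)‖
        + Real.sqrt ‖crossRatio (p 0) (p 2) (p 1) (p 3)‖ := by
  classical
  have hdep : ¬ LinearIndependent ℂ p := by
    intro h
    have := h.fintype_card_le_finrank
    simp at this
  obtain ⟨g, hg0, i₀, hgi⟩ := Fintype.not_linearIndependent_iff.mp hdep
  set M : Matrix (Fin 4) (Fin 4) ℂ := Matrix.of (fun i j => herm (p i) (p j)) with hM
  have hdet : M.det = 0 := by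
    rw [← Matrix.det_transpose]
    apply Matrix.exists_mulVec_eq_zero_iff.mp
    refine ⟨g, fun h => hgi (by simp [h]), ?_⟩
    funext j
    have h0 : herm (∑ i, g i • p i) (p j) = 0 := by rw [hg0]; simp [herm]
    rw [herm_sum] at h0
    simpa [Matrix.mulVec, Matrix.transpose, dotProduct, hM, mul_comm] using h0
  rw [my_det_fin_four] at hdet
  set a := herm (p 0) (p 1) with ha
  set b := herm (p 0) (p 2) with hb
  set c := herm (p 0) (p 3) with hc
  set d := herm (p 1) (p 2) with hd
  set e := herm (p 1) (p 3) with he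
  set f := herm (p 2) (p 3) with hf
  simp only [hM, Matrix.of_apply, hnull 0, hnull 1, hnull 2, hnull 3,
    herm_conj (p 0) (p 1), herm_conj (p 0) (p 2), herm_conj (p 0) (p 3),
    herm_conj (p 1) (p 2), herm_conj (p 1) (p 3), herm_conj (p 2) (p 3),
    ← ha, ← hb, ← hc, ← hd, ← he, ← hf] at hdet
  -- key complex identity from det = 0
  have hkey : ((Complex.normSq a * Complex.normSq f + Complex.normSq b * Complex.normSq e
      + Complex.normSq c * Complex.normSq d : ℝ) : ℂ)
      = (a * d * f * starRingEnd ℂ c + starRingEnd ℂ (a * d * f * starRingEnd ℂ c))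
        + (a * e * starRingEnd ℂ f * starRingEnd ℂ b
            + starRingEnd ℂ (a * e * starRingEnd ℂ f * starRingEnd ℂ b))
        + (b * starRingEnd ℂ d * e * starRingEnd ℂ c
            + starRingEnd ℂ (b * starRingEnd ℂ d * e * starRingEnd ℂ c)) := by
    push_cast
    simp only [← Complex.mul_conj, map_mul, Complex.conj_conj]
    linear_combination hdet
  rw [Complex.add_conj, Complex.add_conj, Complex.add_conj] at hkey
  have hR : Complex.normSq a * Complex.normSq f + Complex.normSq b * Complex.normSq e
      + Complex.normSq c * Complex.normSq d
      = 2 * (a * d * f * starRingEnd ℂ c).re + 2 * (a * e * starRingEnd ℂ f * starRingEnd ℂ b).re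
        + 2 * (b * starRingEnd ℂ d * e * starRingEnd ℂ c).re := by
    exact_mod_cast hkey
  -- bound real parts by absolute values
  have habs1 : (a * d * f * starRingEnd ℂ c).re ≤
      ‖a‖ * ‖d‖ * ‖f‖ * ‖c‖ := by
    calc (a * d * f * starRingEnd ℂ c).re ≤ ‖a * d * f * starRingEnd ℂ c‖ :=
          Complex.re_le_norm _
      _ = _ := by simp [map_mul, Complex.norm_conj]
  have habs2 : (a * e * starRingEnd ℂ f * starRingEnd ℂ b).re ≤
      ‖a‖ * ‖e‖ * ‖f‖ * ‖b‖ := by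
    calc (a * e * starRingEnd ℂ f * starRingEnd ℂ b).re
        ≤ ‖a * e * starRingEnd ℂ f * starRingEnd ℂ b‖ := Complex.re_le_norm _
      _ = _ := by simp [map_mul, Complex.norm_conj]
  have habs3 : (b * starRingEnd ℂ d * e * starRingEnd ℂ c).re ≤
      ‖b‖ * ‖d‖ * ‖e‖ * ‖c‖ := by
    calc (b * starRingEnd ℂ d * e * starRingEnd ℂ c).re
        ≤ ‖b * starRingEnd ℂ d * e * starRingEnd ℂ c‖ := Complex.re_le_norm _
      _ = _ := by simp [map_mul, Complex.norm_conj]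
  set α := ‖a‖
  set β := ‖b‖
  set γ := ‖c‖
  set δ := ‖d‖
  set ε := ‖e‖
  set φ := ‖f‖
  have hα : 0 < α := norm_pos_iff.mpr (hpair 0 1 (by decide))
  have hβ : 0 < β := norm_pos_iff.mpr (hpair 0 2 (by decide))
  have hγ : 0 < γ := norm_pos_iff.mpr (hpair 0 3 (by decide))
  have hδ : 0 < δ := norm_pos_iff.mpr (hpair 1 2 (by decide))
  have hε : 0 < ε := norm_pos_iff.mpr (hpair 1 3 (by decide))
  have hφ : 0 < φ := norm_pos_iff.mpr (hpair 2 3 (by decide))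
  have hns : ∀ z : ℂ, Complex.normSq z = ‖z‖ ^ 2 := fun z =>
    (Complex.sq_norm z).symm
  rw [hns a, hns b, hns c, hns d, hns e, hns f] at hR
  have hineq' : (α*φ)^2 + (β*ε)^2 + (γ*δ)^2
      ≤ 2*((α*φ)*(β*ε)) + 2*((α*φ)*(γ*δ)) + 2*((β*ε)*(γ*δ)) := by nlinarith [hR, habs1, habs2, habs3]
  -- compute the cross-ratio absolute values
  have hX1 : ‖crossRatio (p 0) (p 1) (p 2) (p 3)‖ = (β*ε)/(γ*δ) := by
    rw [crossRatio, herm_conj (p 0) (p 2), herm_conj (p 1) (p 3), herm_conj (p 0) (p 3),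
      herm_conj (p 1) (p 2), ← hb, ← he, ← hc, ← hd]
    simp [map_div₀, map_mul, Complex.norm_conj]
    rfl
  have hX2 : ‖crossRatio (p 0) (p 2) (p 1) (p 3)‖ = (α*φ)/(γ*δ) := by
    rw [crossRatio, herm_conj (p 0) (p 1), herm_conj (p 2) (p 3), herm_conj (p 0) (p 3),
      herm_conj (p 2) (p 1), herm_conj (p 1) (p 2), ← ha, ← hf, ← hc, ← hd]
    simp [map_div₀, map_mul, Complex.norm_conj]
    rfl
  rw [hX1, hX2, Real.sqrt_div (by positivity), Real.sqrt_div (by positivity)]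
  rw [← add_div, le_div_iff₀ (Real.sqrt_pos.mpr (by positivity))]
  -- final: √(γδ) ≤ √(βε) + √(αφ)
  have hsa : Real.sqrt (α*φ) ^ 2 = α*φ := Real.sq_sqrt (by positivity)
  have hsb : Real.sqrt (β*ε) ^ 2 = β*ε := Real.sq_sqrt (by positivity)
  have hsc : Real.sqrt (γ*δ) ^ 2 = γ*δ := Real.sq_sqrt (by positivity)
  have hsa' : 0 < Real.sqrt (α*φ) := Real.sqrt_pos.mpr (by positivity)
  have hsb' : 0 < Real.sqrt (β*ε) := Real.sqrt_pos.mpr (by positivity)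
  have hsc' : 0 < Real.sqrt (γ*δ) := Real.sqrt_pos.mpr (by positivity)
  set sa := Real.sqrt (α*φ)
  set sb := Real.sqrt (β*ε)
  set sc := Real.sqrt (γ*δ)
  rw [one_mul]
  by_contra hcon
  push_neg at hcon
  have h4 : 0 < sc - sb - sa := by linarith
  have h2 : 0 < -sa + sb + sc := by linarith
  have h3 : 0 < sa - sb + sc := by linarith
  have h1 : 0 < sa + sb + sc := by linarith
  have hprod : 0 < (sa + sb + sc) * (-sa + sb + sc) * (sa - sb + sc) * (sc - sb - sa) :=
    mul_pos (mul_pos (mul_pos h1 h2) h3) h4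
  nlinarith [hineq', hsa, hsb, hsc, hprod]
end

section
/- (Ptolemaean inequality in the Heisenberg group, third form) For any four points p₁, p₂, p₃, p₄ of the Heisenberg group ℂ × ℝ, the Korányi–Cygan metric satisfies d_K(p₁,p₂)·d_K(p₃,p₄) ≤ d_K(p₁,p₃)·d_K(p₂,p₄) + d_K(p₂,p₃)·d_K(p₁,p₄). -/
set_option maxHeartbeats 1000000

/-- The Korányi–Cygan metric on the Heisenberg group ℂ × ℝ. -/
noncomputable def dK (p q : ℂ × ℝ) : ℝ :=
  Real.sqrt ‖
    ((‖p.1 - q.1‖ : ℂ) ^ 2 - Complex.I * (p.2 : ℂ) + Complex.I * (q.2 : ℂ)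
      - 2 * Complex.I * ((p.1 * starRingEnd ℂ q.1).im : ℂ))‖

/-- The complexified square of the Korányi–Cygan gauge of `q⁻¹ * p`. -/
noncomputable def aK (p q : ℂ × ℝ) : ℂ :=
  p.1 * (starRingEnd ℂ) p.1 + q.1 * (starRingEnd ℂ) q.1 - 2 * p.1 * (starRingEnd ℂ) q.1
    - Complex.I * (p.2 : ℂ) + Complex.I * (q.2 : ℂ)

lemma dK_eq (p q : ℂ × ℝ) : dK p q = Real.sqrt (‖aK p q‖) := by
  unfold dK
  congr 2
  rw [Complex.im_eq_sub_conj, ← Complex.ofReal_pow, Complex.sq_norm, ← Complex.mul_conj]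
  rw [mul_div_assoc', mul_div_cancel_left₀]
  · simp only [aK, map_sub, map_add, map_mul, Complex.conj_conj]
    ring
  · simp [Complex.I_ne_zero]

/-- The master ("Ptolemaean") algebraic identity. -/
lemma M_id (p₁ p₂ p₃ p₄ : ℂ × ℝ) : aK p₁ p₂ * (aK p₃ p₄ * (starRingEnd ℂ) (aK p₃ p₄)) =
      aK p₁ p₃ * (starRingEnd ℂ) (aK p₂ p₄) * aK p₃ p₄
      + (starRingEnd ℂ) (aK p₂ p₃) * aK p₁ p₄ * (starRingEnd ℂ) (aK p₃ p₄)
      - 2 * ((p₁.1 - p₄.1) * aK p₃ p₄ - (p₃.1 - p₄.1) * aK p₁ p₄)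
          * (starRingEnd ℂ) ((p₂.1 - p₄.1) * aK p₃ p₄ - (p₃.1 - p₄.1) * aK p₂ p₄) := by
  simp only [aK, map_sub, map_add, map_mul, map_neg, map_ofNat,
    Complex.conj_conj, Complex.conj_I, Complex.conj_ofReal]
  ring

/-- The norm identity for the cross terms. -/
lemma I_id (p₁ p₃ p₄ : ℂ × ℝ) :
    aK p₁ p₃ * (starRingEnd ℂ) (aK p₁ p₄) * aK p₃ p₄
      + (starRingEnd ℂ) (aK p₁ p₃ * (starRingEnd ℂ) (aK p₁ p₄) * aK p₃ p₄)
      = 2 * (((p₁.1 - p₄.1) * aK p₃ p₄ - (p₃.1 - p₄.1) * aK p₁ p₄)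
          * (starRingEnd ℂ) ((p₁.1 - p₄.1) * aK p₃ p₄ - (p₃.1 - p₄.1) * aK p₁ p₄)) := by
  simp only [aK, map_sub, map_add, map_mul, map_neg, map_ofNat,
    Complex.conj_conj, Complex.conj_I, Complex.conj_ofReal]
  ring

lemma key_ineq (p₁ p₃ p₄ : ℂ × ℝ) :
    ‖(p₁.1 - p₄.1) * aK p₃ p₄ - (p₃.1 - p₄.1) * aK p₁ p₄‖ ^ 2
      ≤ ‖aK p₁ p₃‖ * ‖aK p₁ p₄‖ * ‖aK p₃ p₄‖ := by
  set m : ℂ := (p₁.1 - p₄.1) * aK p₃ p₄ - (p₃.1 - p₄.1) * aK p₁ p₄ with hm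
  set w : ℂ := aK p₁ p₃ * (starRingEnd ℂ) (aK p₁ p₄) * aK p₃ p₄ with hw
  have I1 : w + (starRingEnd ℂ) w = 2 * (m * (starRingEnd ℂ) m) := I_id p₁ p₃ p₄
  have h2 : w.re = Complex.normSq m := by
    have h1 := congrArg Complex.re I1
    rw [Complex.mul_conj] at h1
    simp [Complex.add_re, Complex.conj_re, Complex.ofReal_re] at h1
    linarith
  have h3 : Complex.normSq m ≤ ‖w‖ := by
    rw [← h2]; exact Complex.re_le_norm _
  calc ‖m‖ ^ 2 = Complex.normSq m := Complex.sq_norm _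
    _ ≤ ‖w‖ := h3
    _ = ‖aK p₁ p₃‖ * ‖aK p₁ p₄‖ * ‖aK p₃ p₄‖ := by
        rw [hw]; simp [map_mul, Complex.norm_conj]

theorem ptolemaean_inequality_heisenberg_third (p₁ p₂ p₃ p₄ : ℂ × ℝ) :
    dK p₁ p₂ * dK p₃ p₄ ≤ dK p₁ p₃ * dK p₂ p₄ + dK p₂ p₃ * dK p₁ p₄ := by
  simp only [dK_eq]
  set m13 : ℂ := (p₁.1 - p₄.1) * aK p₃ p₄ - (p₃.1 - p₄.1) * aK p₁ p₄ with hm13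
  set m23 : ℂ := (p₂.1 - p₄.1) * aK p₃ p₄ - (p₃.1 - p₄.1) * aK p₂ p₄ with hm23
  set r12 := ‖aK p₁ p₂‖ with hr12d
  set r13 := ‖aK p₁ p₃‖ with hr13d
  set r23 := ‖aK p₂ p₃‖ with hr23d
  set B1 := ‖aK p₁ p₄‖ with hB1d
  set B2 := ‖aK p₂ p₄‖ with hB2d
  set B3 := ‖aK p₃ p₄‖ with hB3d
  set x := ‖m13‖ with hxd
  set y := ‖m23‖ with hyd
  have hr12 : (0:ℝ) ≤ r12 := norm_nonneg _
  have hr13 : (0:ℝ) ≤ r13 := norm_nonneg _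
  have hr23 : (0:ℝ) ≤ r23 := norm_nonneg _
  have hB1 : (0:ℝ) ≤ B1 := norm_nonneg _
  have hB2 : (0:ℝ) ≤ B2 := norm_nonneg _
  have hB3 : (0:ℝ) ≤ B3 := norm_nonneg _
  have hx0 : (0:ℝ) ≤ x := norm_nonneg _
  have hy0 : (0:ℝ) ≤ y := norm_nonneg _
  -- abs of the master identity
  have h : r12 * (B3 * B3) ≤ r13 * B2 * B3 + r23 * B1 * B3 + 2 * (x * y) := by
    have h1 : r12 * (B3 * B3) = ‖aK p₁ p₃ * (starRingEnd ℂ) (aK p₂ p₄) * aK p₃ p₄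
        + (starRingEnd ℂ) (aK p₂ p₃) * aK p₁ p₄ * (starRingEnd ℂ) (aK p₃ p₄)
        - 2 * m13 * (starRingEnd ℂ) m23‖ := by
      rw [hm13, hm23, ← M_id p₁ p₂ p₃ p₄]
      simp [map_mul, Complex.norm_conj, hr12d, hB3d]
    rw [h1]
    calc ‖aK p₁ p₃ * (starRingEnd ℂ) (aK p₂ p₄) * aK p₃ p₄
        + (starRingEnd ℂ) (aK p₂ p₃) * aK p₁ p₄ * (starRingEnd ℂ) (aK p₃ p₄)
        - 2 * m13 * (starRingEnd ℂ) m23‖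
        ≤ ‖aK p₁ p₃ * (starRingEnd ℂ) (aK p₂ p₄) * aK p₃ p₄
          + (starRingEnd ℂ) (aK p₂ p₃) * aK p₁ p₄ * (starRingEnd ℂ) (aK p₃ p₄)‖
          + ‖2 * m13 * (starRingEnd ℂ) m23‖ := by
          simpa [sub_eq_add_neg] using norm_add_le
            (aK p₁ p₃ * (starRingEnd ℂ) (aK p₂ p₄) * aK p₃ p₄
              + (starRingEnd ℂ) (aK p₂ p₃) * aK p₁ p₄ * (starRingEnd ℂ) (aK p₃ p₄))
            (-(2 * m13 * (starRingEnd ℂ) m23))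
      _ ≤ ‖aK p₁ p₃ * (starRingEnd ℂ) (aK p₂ p₄) * aK p₃ p₄‖
          + ‖(starRingEnd ℂ) (aK p₂ p₃) * aK p₁ p₄ * (starRingEnd ℂ) (aK p₃ p₄)‖
          + ‖2 * m13 * (starRingEnd ℂ) m23‖ := by
          have := norm_add_le (aK p₁ p₃ * (starRingEnd ℂ) (aK p₂ p₄) * aK p₃ p₄)
            ((starRingEnd ℂ) (aK p₂ p₃) * aK p₁ p₄ * (starRingEnd ℂ) (aK p₃ p₄))
          linarith
      _ = r13 * B2 * B3 + r23 * B1 * B3 + 2 * (x * y) := by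
          simp only [map_mul, norm_mul, Complex.norm_conj, Complex.norm_two,
            hr13d, hr23d, hB1d, hB2d, hB3d, hxd, hyd]
          ring
  have key1 : x ^ 2 ≤ r13 * B1 * B3 := key_ineq p₁ p₃ p₄
  have key2 : y ^ 2 ≤ r23 * B2 * B3 := key_ineq p₂ p₃ p₄
  -- now pure real arithmetic
  rcases eq_or_lt_of_le hB3 with hB3' | hB3'
  · rw [← hB3', Real.sqrt_zero, mul_zero]
    positivity
  set s12 := Real.sqrt r12
  set s13 := Real.sqrt r13
  set s23 := Real.sqrt r23
  set b1 := Real.sqrt B1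
  set b2 := Real.sqrt B2
  set b3 := Real.sqrt B3
  have hs12 : r12 = s12 ^ 2 := (Real.sq_sqrt hr12).symm
  have hs13 : r13 = s13 ^ 2 := (Real.sq_sqrt hr13).symm
  have hs23 : r23 = s23 ^ 2 := (Real.sq_sqrt hr23).symm
  have hb1 : B1 = b1 ^ 2 := (Real.sq_sqrt hB1).symm
  have hb2 : B2 = b2 ^ 2 := (Real.sq_sqrt hB2).symm
  have hb3 : B3 = b3 ^ 2 := (Real.sq_sqrt hB3).symm
  have hb3pos : 0 < b3 := Real.sqrt_pos.mpr hB3'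
  have hs12n : 0 ≤ s12 := Real.sqrt_nonneg _
  have hs13n : 0 ≤ s13 := Real.sqrt_nonneg _
  have hs23n : 0 ≤ s23 := Real.sqrt_nonneg _
  have hb1n : 0 ≤ b1 := Real.sqrt_nonneg _
  have hb2n : 0 ≤ b2 := Real.sqrt_nonneg _
  simp only [hs12, hs13, hs23, hb1, hb2, hb3] at h key1 key2
  have hxy : x * y ≤ (s13 * b1 * b3) * (s23 * b2 * b3) := by
    have hsq : (x * y) ^ 2 ≤ ((s13 * b1 * b3) * (s23 * b2 * b3)) ^ 2 := by
      nlinarith [mul_le_mul key1 key2 (sq_nonneg y)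
        (by positivity : (0:ℝ) ≤ s13 ^ 2 * b1 ^ 2 * b3 ^ 2)]
    have h1 : 0 ≤ (s13 * b1 * b3) * (s23 * b2 * b3) := by positivity
    nlinarith [mul_nonneg hx0 hy0]
  have h2 : (s12 * b3) ^ 2 * b3 ^ 2 ≤ (s13 * b2 + s23 * b1) ^ 2 * b3 ^ 2 := by nlinarith
  have h3 : (s12 * b3) ^ 2 ≤ (s13 * b2 + s23 * b1) ^ 2 :=
    le_of_mul_le_mul_right h2 (by positivity : (0:ℝ) < b3 ^ 2)
  calc s12 * b3 = Real.sqrt ((s12 * b3) ^ 2) := by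
        rw [Real.sqrt_sq (by positivity)]
    _ ≤ Real.sqrt ((s13 * b2 + s23 * b1) ^ 2) := Real.sqrt_le_sqrt h3
    _ = s13 * b2 + s23 * b1 := Real.sqrt_sq (by positivity)
end
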